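/- For every subset S ⊆ {1,…,N} of size at least 2 and every v ∈ S: if Δ₁(S,v) = −1 (i.e., rank(M_{S∖{v}} U) = rank(M_S U) − 1), then ξ₂(S∖{v}) < ξ₂(S), i.e., Δ₂(S,v) > 0; and if Δ₁(S,v) = 0 (i.e., rank(M_{S∖{v}} U) = rank(M_S U)), then ξ₂(S∖{v}) ≥ ξ₂(S), i.e., Δ₂(S,v) ≤ 0. -/

import Mathlib

open Matrix

noncomputable section

open scoped Classical in
/-- The Moore–Penrose pseudoinverse of a real matrix, characterised by the four
Penrose conditions:  `A A† A = A`, `A† A A† = A†`, `(A A†)ᵀ = A A†`, `(A† A)ᵀ = A† A`. -/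
noncomputable def pinv {m n : Type*} [Fintype m] [Fintype n] [DecidableEq m] [DecidableEq n]
    (A : Matrix m n ℝ) : Matrix n m ℝ :=
  if h : ∃ B : Matrix n m ℝ,
      A * B * A = A ∧ B * A * B = B ∧ (A * B)ᵀ = A * B ∧ (B * A)ᵀ = B * A
  then h.choose else 0

/-- The sampling matrix `M_S` of a subset `S ⊆ {1,…,N}`: rows are indexed by the
elements of `S`, and the row corresponding to `j ∈ S` is the standard basis row vector `eⱼᵀ`. -/
def samp {N : ℕ} (S : Finset (Fin N)) : Matrix {x // x ∈ S} (Fin N) ℝ :=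
  fun i j => if (i : Fin N) = j then 1 else 0

/-- Squared Frobenius norm of a matrix. -/
def frobSq {m n : Type*} [Fintype m] [Fintype n] (A : Matrix m n ℝ) : ℝ :=
  ∑ i, ∑ j, (A i j) ^ 2

/-- The least-squares reconstruction matrix `R_S = U (M_S U)†`. -/
def lsRec {N k : ℕ} (U : Matrix (Fin N) (Fin k) ℝ) (S : Finset (Fin N)) :
    Matrix (Fin N) {x // x ∈ S} ℝ :=
  U * pinv (samp S * U)

/-- `ξ₁(S) = ‖U − R_S M_S U‖_F²`, the noiseless reconstruction error. -/
def xi1 {N k : ℕ} (U : Matrix (Fin N) (Fin k) ℝ) (S : Finset (Fin N)) : ℝ :=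
  frobSq (U - lsRec U S * (samp S * U))

/-- `ξ₂(S) = ‖R_S‖_F²`, the noise-sensitivity term. -/
def xi2 {N k : ℕ} (U : Matrix (Fin N) (Fin k) ℝ) (S : Finset (Fin N)) : ℝ :=
  frobSq (lsRec U S)

namespace Stmt14Aux

variable {m n : Type*} [Fintype m] [Fintype n] [DecidableEq m] [DecidableEq n]

def IsPinv (A : Matrix m n ℝ) (B : Matrix n m ℝ) : Prop :=
  A * B * A = A ∧ B * A * B = B ∧ (A * B)ᵀ = A * B ∧ (B * A)ᵀ = B * A

lemma isPinv_unique {A : Matrix m n ℝ} {B C : Matrix n m ℝ}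
    (hB : IsPinv A B) (hC : IsPinv A C) : B = C := by
  obtain ⟨hB1, hB2, hB3, hB4⟩ := hB
  obtain ⟨hC1, hC2, hC3, hC4⟩ := hC
  have hAB : A * B = A * C := by
    calc A * B = (A * C) * (A * B) := by rw [← Matrix.mul_assoc, hC1]
    _ = (A * C)ᵀ * (A * B)ᵀ := by rw [hC3, hB3]
    _ = Cᵀ * (A * B * A)ᵀ := by simp only [transpose_mul, Matrix.mul_assoc]
    _ = Cᵀ * Aᵀ := by rw [hB1]
    _ = (A * C)ᵀ := by rw [transpose_mul]
    _ = A * C := hC3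
  have hBA : B * A = C * A := by
    calc B * A = (B * A) * (C * A) := by rw [Matrix.mul_assoc, ← Matrix.mul_assoc A C A, hC1]
    _ = (B * A)ᵀ * (C * A)ᵀ := by rw [hB4, hC4]
    _ = (A * B * A)ᵀ * Cᵀ := by simp only [transpose_mul, Matrix.mul_assoc]
    _ = Aᵀ * Cᵀ := by rw [hB1]
    _ = (C * A)ᵀ := by rw [transpose_mul]
    _ = C * A := hC4
  calc B = B * A * B := hB2.symm
  _ = C * (A * B) := by rw [hBA, Matrix.mul_assoc]
  _ = C * (A * C) := by rw [hAB]
  _ = C := by rw [← Matrix.mul_assoc, hC2]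

lemma isPinv_pinv {A : Matrix m n ℝ} (h : ∃ B, IsPinv A B) : IsPinv A (pinv A) := by
  have h' : ∃ B : Matrix n m ℝ,
      A * B * A = A ∧ B * A * B = B ∧ (A * B)ᵀ = A * B ∧ (B * A)ᵀ = B * A := h
  rw [pinv, dif_pos h']
  exact h'.choose_spec

lemma pinv_eq {A : Matrix m n ℝ} {B : Matrix n m ℝ} (h : IsPinv A B) : pinv A = B :=
  isPinv_unique (isPinv_pinv ⟨B, h⟩) h

lemma exists_isPinv_of_symm (A : Matrix n n ℝ) (hA : Aᵀ = A) : ∃ B, IsPinv A B := by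
  have hH : A.IsHermitian := by rwa [Matrix.IsHermitian, conjTranspose_eq_transpose_of_trivial]
  set V : Matrix n n ℝ := (hH.eigenvectorUnitary : Matrix n n ℝ) with hV
  have hsV : star V * V = 1 := Unitary.coe_star_mul_self hH.eigenvectorUnitary
  have hsV' : ∀ (X : Matrix n n ℝ), star V * (V * X) = X := by
    intro X; rw [← Matrix.mul_assoc, hsV, Matrix.one_mul]
  set d : n → ℝ := RCLike.ofReal ∘ hH.eigenvalues with hd
  have hspec : A = V * diagonal d * star V := hH.spectral_theorem
  have key : ∀ (e f : n → ℝ), (V * diagonal e * star V) * (V * diagonal f * star V)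
      = V * diagonal (fun i => e i * f i) * star V := by
    intro e f
    calc (V * diagonal e * star V) * (V * diagonal f * star V)
        = V * (diagonal e * (star V * (V * (diagonal f * star V)))) := by
          simp only [Matrix.mul_assoc]
    _ = V * (diagonal e * (diagonal f * star V)) := by rw [hsV']
    _ = V * (diagonal e * diagonal f) * star V := by simp only [Matrix.mul_assoc]
    _ = V * diagonal (fun i => e i * f i) * star V := by rw [diagonal_mul_diagonal]
  have hstar : (star V : Matrix n n ℝ) = Vᵀ := by
    ext i j; simp [Matrix.star_apply]
  have symm_form : ∀ e : n → ℝ, (V * diagonal e * star V)ᵀ = V * diagonal e * star V := by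
    intro e
    rw [hstar, transpose_mul, transpose_mul, transpose_transpose, diagonal_transpose,
      Matrix.mul_assoc]
  have hfun : ∀ (f g : n → ℝ), (∀ i, f i = g i) →
      V * diagonal f * star V = V * diagonal g * star V := fun f g h =>
    congrArg (fun M => V * M * star V) (congrArg diagonal (funext h))
  refine ⟨V * diagonal (fun i => (d i)⁻¹) * star V, ?_, ?_, ?_, ?_⟩
  · rw [hspec, key, key]
    refine hfun _ _ fun i => ?_
    rcases eq_or_ne (d i) 0 with h | h
    · simp [h]
    · field_simp
  · rw [hspec, key, key]
    refine hfun _ _ fun i => ?_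
    rcases eq_or_ne (d i) 0 with h | h
    · simp [h]
    · field_simp
  · rw [hspec, key]; exact symm_form _
  · rw [hspec, key]; exact symm_form _

lemma isPinv_transpose {A : Matrix m n ℝ} {B : Matrix n m ℝ} (h : IsPinv A B) :
    IsPinv Aᵀ Bᵀ := by
  obtain ⟨h1, h2, h3, h4⟩ := h
  refine ⟨?_, ?_, ?_, ?_⟩
  · calc Aᵀ * Bᵀ * Aᵀ = (A * B * A)ᵀ := by simp only [transpose_mul, Matrix.mul_assoc]
    _ = Aᵀ := by rw [h1]
  · calc Bᵀ * Aᵀ * Bᵀ = (B * A * B)ᵀ := by simp only [transpose_mul, Matrix.mul_assoc]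
    _ = Bᵀ := by rw [h2]
  · calc (Aᵀ * Bᵀ)ᵀ = ((B * A)ᵀ)ᵀ := by simp only [transpose_mul]
    _ = (B * A) := by rw [transpose_transpose]
    _ = (B * A)ᵀ := h4.symm
    _ = Aᵀ * Bᵀ := by simp only [transpose_mul]
  · calc (Bᵀ * Aᵀ)ᵀ = ((A * B)ᵀ)ᵀ := by simp only [transpose_mul]
    _ = (A * B) := by rw [transpose_transpose]
    _ = (A * B)ᵀ := h3.symm
    _ = Bᵀ * Aᵀ := by simp only [transpose_mul]

lemma isPinv_symm_of_symm {G P : Matrix n n ℝ} (hG : Gᵀ = G) (hP : IsPinv G P) :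
    Pᵀ = P := by
  have h1 : IsPinv G Pᵀ := by have := isPinv_transpose hP; rwa [hG] at this
  exact isPinv_unique h1 hP

lemma isPinv_mul_pinv_gram (A : Matrix m n ℝ) {P : Matrix n n ℝ}
    (hP : IsPinv (Aᵀ * A) P) : IsPinv A (P * Aᵀ) := by
  have hW : (Aᵀ * A)ᵀ = Aᵀ * A := by simp only [transpose_mul, transpose_transpose]
  have hPs : Pᵀ = P := isPinv_symm_of_symm hW hP
  obtain ⟨hP1, hP2, hP3, hP4⟩ := hP
  have hP1' : Aᵀ * A * P * Aᵀ * A = Aᵀ * A := by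
    simpa only [← Matrix.mul_assoc] using hP1
  have hP2' : P * Aᵀ * A * P = P := by
    simpa only [← Matrix.mul_assoc] using hP2
  have hcomm : Aᵀ * A * P = P * Aᵀ * A := by
    have h := hP4
    rw [transpose_mul, hPs, hW] at h
    simpa only [← Matrix.mul_assoc] using h
  have hXA : A * (P * Aᵀ) * A = A := by
    set X : Matrix m n ℝ := A * (P * Aᵀ) * A with hX
    have h2 : Aᵀ * X = Aᵀ * A := by
      rw [hX]
      simp only [← Matrix.mul_assoc]
      exact hP1'
    have h3 : Xᵀ * A = Aᵀ * A := by
      have h := congrArg transpose h2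
      rwa [transpose_mul, transpose_transpose, hW] at h
    have h1 : Xᵀ * X = Aᵀ * A := by
      rw [hX]
      simp only [transpose_mul, transpose_transpose, hPs, ← Matrix.mul_assoc]
      rw [hP1', hP1']
    have hM : (X - A)ᵀ * (X - A) = 0 := by
      rw [transpose_sub, Matrix.sub_mul, Matrix.mul_sub, Matrix.mul_sub, h1, h2, h3]
      abel
    have hM0 : X - A = 0 := by
      rw [← conjTranspose_eq_transpose_of_trivial] at hM
      exact conjTranspose_mul_self_eq_zero.mp hM
    have := sub_eq_zero.mp hM0
    rwa [hX] at this
  refine ⟨hXA, ?_, ?_, ?_⟩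
  · have h : P * Aᵀ * A * (P * Aᵀ) = P * Aᵀ * A * P * Aᵀ := by simp only [Matrix.mul_assoc]
    rw [h, hP2']
  · have h : A * (P * Aᵀ) = A * P * Aᵀ := by rw [Matrix.mul_assoc]
    rw [h, transpose_mul, transpose_mul, transpose_transpose, hPs, Matrix.mul_assoc]
  · have h : P * Aᵀ * A = P * (Aᵀ * A) := by rw [Matrix.mul_assoc]
    rw [h, hP4]

lemma exists_isPinv (A : Matrix m n ℝ) : ∃ B, IsPinv A B := by
  have hW : (Aᵀ * A)ᵀ = Aᵀ * A := by simp only [transpose_mul, transpose_transpose]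
  obtain ⟨P, hP⟩ := exists_isPinv_of_symm _ hW
  exact ⟨P * Aᵀ, isPinv_mul_pinv_gram A hP⟩

lemma isPinv_pinv' (A : Matrix m n ℝ) : IsPinv A (pinv A) := isPinv_pinv (exists_isPinv A)

lemma pinv_symm {G : Matrix n n ℝ} (hG : Gᵀ = G) : (pinv G)ᵀ = pinv G :=
  isPinv_symm_of_symm hG (isPinv_pinv' G)

lemma pinv_eq_pinv_gram_mul (A : Matrix m n ℝ) : pinv A = pinv (Aᵀ * A) * Aᵀ := by
  have hW : (Aᵀ * A)ᵀ = Aᵀ * A := by simp only [transpose_mul, transpose_transpose]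
  exact pinv_eq (isPinv_mul_pinv_gram A (isPinv_pinv (exists_isPinv_of_symm _ hW)))

lemma vmv_zero_left (v : n → ℝ) : vecMulVec (0 : n → ℝ) v = 0 := by
  ext i j; simp [vecMulVec_apply]

lemma vmv_sub_left (u w v : n → ℝ) :
    vecMulVec (u - w) v = vecMulVec u v - vecMulVec w v := by
  ext i j; simp [vecMulVec_apply, sub_mul]

lemma mul_vmv (M : Matrix n n ℝ) (u v : n → ℝ) :
    M * vecMulVec u v = vecMulVec (M *ᵥ u) v := by
  ext i j
  simp only [mul_apply, vecMulVec_apply, mulVec, dotProduct]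
  rw [Finset.sum_mul]
  exact Finset.sum_congr rfl fun l _ => by ring

lemma vmv_mul (M : Matrix n n ℝ) (u v : n → ℝ) :
    vecMulVec u v * M = vecMulVec u (v ᵥ* M) := by
  ext i j
  simp only [mul_apply, vecMulVec_apply, vecMul, dotProduct]
  rw [Finset.mul_sum]
  exact Finset.sum_congr rfl fun l _ => by ring

lemma vmv_mul_vmv (u v x y : n → ℝ) :
    vecMulVec u v * vecMulVec x y = (v ⬝ᵥ x) • vecMulVec u y := by
  ext i j
  simp only [mul_apply, vecMulVec_apply, Matrix.smul_apply, dotProduct, smul_eq_mul]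
  rw [Finset.sum_mul]
  exact Finset.sum_congr rfl fun l _ => by ring

lemma trace_vmv (u v : n → ℝ) : trace (vecMulVec u v) = u ⬝ᵥ v := by
  simp [trace, vecMulVec_apply, Matrix.diag, dotProduct]

lemma vmv_transpose (u v : n → ℝ) : (vecMulVec u v)ᵀ = vecMulVec v u := by
  ext i j; simp [vecMulVec_apply, mul_comm]

lemma vecMul_eq (M : Matrix n n ℝ) (x : n → ℝ) : x ᵥ* M = Mᵀ *ᵥ x := by
  rw [← vecMul_transpose, transpose_transpose]

lemma dotProduct_self_nonneg (v : n → ℝ) : 0 ≤ v ⬝ᵥ v :=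
  Finset.sum_nonneg fun i _ => mul_self_nonneg (v i)

lemma vmv_zero_right (u : n → ℝ) : vecMulVec u (0 : n → ℝ) = 0 := by
  ext i j; simp [vecMulVec_apply]

lemma vmv_mulVec (u v x : n → ℝ) : vecMulVec u v *ᵥ x = (v ⬝ᵥ x) • u := by
  ext i
  simp only [mulVec, dotProduct, vecMulVec_apply, Pi.smul_apply, smul_eq_mul]
  rw [Finset.sum_mul]
  exact Finset.sum_congr rfl fun l _ => by ring

lemma vecMul_vmv (x u v : n → ℝ) : x ᵥ* vecMulVec u v = (x ⬝ᵥ u) • v := by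
  ext j
  simp only [vecMul, dotProduct, vecMulVec_apply, Pi.smul_apply, smul_eq_mul]
  rw [Finset.sum_mul]
  exact Finset.sum_congr rfl fun l _ => by ring

lemma vmv_smul_left (r : ℝ) (u v : n → ℝ) : vecMulVec (r • u) v = r • vecMulVec u v := by
  ext i j; simp [vecMulVec_apply, mul_assoc]

lemma vmv_smul_right (r : ℝ) (u v : n → ℝ) : vecMulVec u (r • v) = r • vecMulVec u v := by
  ext i j; simp [vecMulVec_apply]; ring

lemma meyer_main (G P : Matrix n n ℝ) (hG : Gᵀ = G) (hP : IsPinv G P)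
    (hPSD : ∀ x : n → ℝ, 0 ≤ (G *ᵥ x) ⬝ᵥ x) (a : n → ℝ) :
    (trace (pinv (G + vecMulVec a a) * (G + vecMulVec a a)) = trace (P * G) + 1 ∧
       trace P < trace (pinv (G + vecMulVec a a)))
    ∨ (trace (pinv (G + vecMulVec a a) * (G + vecMulVec a a)) = trace (P * G) ∧
       trace (pinv (G + vecMulVec a a)) ≤ trace P) := by
  have hPs : Pᵀ = P := isPinv_symm_of_symm hG hP
  obtain ⟨h1, h2, h3, h4⟩ := hP
  have hcomm : G * P = P * G := by
    conv_lhs => rw [← h3]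
    rw [transpose_mul, hPs, hG]
  set H : Matrix n n ℝ := G + vecMulVec a a with hH
  have hHs : Hᵀ = H := by
    rw [hH, transpose_add, hG, vmv_transpose]
  set d : n → ℝ := P *ᵥ a with hd
  set c : n → ℝ := a - G *ᵥ d with hc
  have hGd : G *ᵥ d = a - c := by rw [hc, sub_sub_cancel]
  have ha : a = c + G *ᵥ d := by rw [hc, sub_add_cancel]
  have hGGP : G * G * P = G := by
    rw [Matrix.mul_assoc, hcomm, ← Matrix.mul_assoc, h1]
  have hGc : G *ᵥ c = 0 := by
    rw [hc, mulVec_sub, hd, mulVec_mulVec, mulVec_mulVec, hGGP, sub_self]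
  have hPc : P *ᵥ c = 0 := by
    rw [hc, mulVec_sub, hd, mulVec_mulVec, mulVec_mulVec, h2, sub_self]
  have hcvP : c ᵥ* P = 0 := by rw [vecMul_eq, hPs, hPc]
  have hcvG : c ᵥ* G = 0 := by rw [vecMul_eq, hG, hGc]
  have havP : a ᵥ* P = d := by rw [vecMul_eq, hPs, hd]
  have hdvG : d ᵥ* G = a - c := by rw [vecMul_eq, hG, hGd]
  have hcd : c ⬝ᵥ d = 0 := by rw [hd, dotProduct_mulVec, hcvP, zero_dotProduct]
  have hdc : d ⬝ᵥ c = 0 := by rw [dotProduct_comm]; exact hcd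
  set γ : ℝ := c ⬝ᵥ c with hγ
  set α : ℝ := a ⬝ᵥ d with hα
  set β : ℝ := 1 + α with hβ
  have hGdc : (G *ᵥ d) ⬝ᵥ c = 0 := by
    rw [dotProduct_comm, dotProduct_mulVec, hcvG, zero_dotProduct]
  have hac : a ⬝ᵥ c = γ := by
    conv_lhs => rw [ha]
    rw [add_dotProduct, hGdc, add_zero, hγ]
  have hca : c ⬝ᵥ a = γ := by rw [dotProduct_comm]; exact hac
  have hda : d ⬝ᵥ a = α := by rw [dotProduct_comm]
  have hαnn : 0 ≤ α := by
    have h' : α = c ⬝ᵥ d + (G *ᵥ d) ⬝ᵥ d := by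
      rw [hα]; conv_lhs => rw [ha]
      rw [add_dotProduct]
    rw [h', hcd, zero_add]
    exact hPSD d
  have hβpos : 0 < β := by rw [hβ]; linarith
  have hβne : β ≠ 0 := ne_of_gt hβpos
  have hGPd : (G * P) *ᵥ d = d := by
    rw [hd, mulVec_mulVec, hcomm, h2]
  have hdvGP : d ᵥ* (G * P) = d := by
    rw [vecMul_eq, h3, hGPd]
  have hGPa : (G * P) *ᵥ a = a - c := by
    rw [← Matrix.mulVec_mulVec, ← hd, hGd]
  have hGPc : (G * P) *ᵥ c = 0 := by
    rw [← Matrix.mulVec_mulVec, hPc, mulVec_zero]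
  have hcvGP : c ᵥ* (G * P) = 0 := by
    rw [vecMul_eq, h3, hGPc]
  by_cases hc0 : c = 0
  · -- rank stays: c = 0
    right
    have ha' : G *ᵥ d = a := by rw [hGd, hc0, sub_zero]
    have hdvG' : d ᵥ* G = a := by rw [hdvG, hc0, sub_zero]
    have hGPa' : (G * P) *ᵥ a = a := by rw [hGPa, hc0, sub_zero]
    set K : Matrix n n ℝ := P - β⁻¹ • vecMulVec d d with hK
    have hKs : Kᵀ = K := by
      rw [hK, transpose_sub, hPs, transpose_smul, vmv_transpose]
    have hHK : H * K = G * P := by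
      rw [hH, hK]
      simp only [Matrix.add_mul, Matrix.sub_mul, Matrix.mul_add, Matrix.mul_sub,
        Matrix.mul_smul, Matrix.smul_mul, ← Matrix.mul_assoc, mul_vmv, vmv_mul,
        vmv_mul_vmv, ha', havP, ← hα, Matrix.zero_mul, Matrix.mul_zero, smul_zero,
        add_zero, zero_add, sub_zero, vmv_mulVec, vecMul_vmv, vmv_smul_left, vmv_smul_right, smul_smul,
        smul_dotProduct, dotProduct_smul, zero_dotProduct, dotProduct_zero, zero_smul,
        Matrix.sub_vecMul, Matrix.zero_vecMul, Matrix.vecMul_zero, Matrix.mulVec_zero,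
        mulVec_sub, sub_dotProduct, dotProduct_sub, add_dotProduct, dotProduct_add]
      match_scalars <;> (try simp only [hβ]) <;> (try field_simp) <;> (try ring)
    have hKH : K * H = G * P := by
      have h' : K * H = (Hᵀ * Kᵀ)ᵀ := by
        rw [transpose_mul, transpose_transpose, transpose_transpose]
      rw [h', hHs, hKs, hHK, transpose_mul, hPs, hG, hcomm]
    have hQH : (G * P) * H = H := by
      rw [hH]
      simp only [Matrix.mul_add, h1, mul_vmv, hGPa']
    have hKQ : K * (G * P) = K := by
      rw [hK]
      simp only [Matrix.sub_mul, Matrix.smul_mul, ← Matrix.mul_assoc, h2, vmv_mul, hdvGP,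
        hdvG', havP]
    have hpinvH : pinv H = K := by
      refine pinv_eq ⟨?_, ?_, ?_, ?_⟩
      · rw [hHK, hQH]
      · rw [hKH]
        have h' : (G * P) * K = (Kᵀ * (G * P)ᵀ)ᵀ := by
          rw [transpose_mul, transpose_transpose, transpose_transpose]
        rw [h', hKs, h3, hKQ, hKs]
      · rw [hHK]; exact h3
      · rw [hKH]; exact h3
    constructor
    · rw [hpinvH, hKH, trace_mul_comm]
    · rw [hpinvH, hK, trace_sub, trace_smul, trace_vmv, smul_eq_mul]
      have hdd : 0 ≤ d ⬝ᵥ d := dotProduct_self_nonneg d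
      have hβinv : 0 ≤ β⁻¹ := le_of_lt (inv_pos.mpr hβpos)
      nlinarith
  · -- rank drops: c ≠ 0
    left
    have hγpos : 0 < γ := by
      rcases lt_or_eq_of_le (dotProduct_self_nonneg c) with h | h
      · exact h
      · exact absurd (dotProduct_self_eq_zero.mp h.symm) hc0
    have hγne : γ ≠ 0 := ne_of_gt hγpos
    set K : Matrix n n ℝ :=
      P - γ⁻¹ • (vecMulVec c d + vecMulVec d c) + (β / γ ^ 2) • vecMulVec c c with hK
    set R : Matrix n n ℝ := G * P + γ⁻¹ • vecMulVec c c with hR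
    have hKs : Kᵀ = K := by
      rw [hK, transpose_add, transpose_sub, hPs, transpose_smul, transpose_smul,
        transpose_add, vmv_transpose, vmv_transpose, vmv_transpose,
        add_comm (vecMulVec d c)]
    have hRs : Rᵀ = R := by
      rw [hR, transpose_add, h3, transpose_smul, vmv_transpose]
    have hHK : H * K = R := by
      rw [hH, hK, hR]
      simp only [Matrix.add_mul, Matrix.sub_mul, Matrix.mul_add, Matrix.mul_sub,
        Matrix.mul_smul, Matrix.smul_mul, ← Matrix.mul_assoc, mul_vmv, vmv_mul,
        vmv_mul_vmv, hGc, hGd, havP, hac, hca, hcd, hdc, ← hα, ← hγ, hda,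
        vmv_zero_left, vmv_zero_right, vmv_sub_left, Matrix.zero_mul, Matrix.mul_zero,
        smul_zero, add_zero, zero_add, sub_zero, zero_sub, vmv_mulVec, vecMul_vmv, vmv_smul_left, vmv_smul_right, smul_smul,
        smul_dotProduct, dotProduct_smul, zero_dotProduct, dotProduct_zero, zero_smul,
        Matrix.sub_vecMul, Matrix.zero_vecMul, Matrix.vecMul_zero, Matrix.mulVec_zero,
        mulVec_sub, sub_dotProduct, dotProduct_sub, add_dotProduct, dotProduct_add]
      match_scalars <;> (try simp only [hβ]) <;> (try field_simp) <;> (try ring)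
    have hKH : K * H = R := by
      have h' : K * H = (Hᵀ * Kᵀ)ᵀ := by
        rw [transpose_mul, transpose_transpose, transpose_transpose]
      rw [h', hHs, hKs, hHK, hRs]
    have hRH : R * H = H := by
      rw [hR, hH]
      simp only [Matrix.add_mul, Matrix.mul_add, Matrix.smul_mul, Matrix.mul_smul,
        ← Matrix.mul_assoc, h1, mul_vmv, vmv_mul, vmv_mul_vmv, hGPa, hcvG, hca,
        vmv_zero_left, vmv_zero_right, vmv_sub_left, Matrix.zero_mul, Matrix.mul_zero,
        smul_zero, add_zero, zero_add, sub_zero, ← hγ, vmv_mulVec, vecMul_vmv, vmv_smul_left, vmv_smul_right, smul_smul,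
        smul_dotProduct, dotProduct_smul, zero_dotProduct, dotProduct_zero, zero_smul,
        Matrix.sub_vecMul, Matrix.zero_vecMul, Matrix.vecMul_zero, Matrix.mulVec_zero,
        mulVec_sub, sub_dotProduct, dotProduct_sub, add_dotProduct, dotProduct_add]
      match_scalars <;> (try simp only [hβ]) <;> (try field_simp) <;> (try ring)
    have hKR : K * R = K := by
      rw [hK, hR]
      simp only [Matrix.add_mul, Matrix.sub_mul, Matrix.mul_add, Matrix.mul_sub,
        Matrix.mul_smul, Matrix.smul_mul, ← Matrix.mul_assoc, h2, mul_vmv, vmv_mul,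
        vmv_mul_vmv, hdvGP, hcvGP, hPc, hcd, hdc, ← hγ, hdvG, hcvG, havP, hcvP, hca, hac,
        vmv_sub_left, vmv_zero_left, vmv_zero_right,
        Matrix.zero_mul, Matrix.mul_zero, smul_zero, add_zero, zero_add, sub_zero,
        zero_smul, vmv_mulVec, vecMul_vmv, vmv_smul_left, vmv_smul_right, smul_smul,
        smul_dotProduct, dotProduct_smul, zero_dotProduct, dotProduct_zero, zero_smul,
        Matrix.sub_vecMul, Matrix.zero_vecMul, Matrix.vecMul_zero, Matrix.mulVec_zero,
        mulVec_sub, sub_dotProduct, dotProduct_sub, add_dotProduct, dotProduct_add]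
      match_scalars <;> (try simp only [hβ]) <;> (try field_simp) <;> (try ring)
    have hpinvH : pinv H = K := by
      refine pinv_eq ⟨?_, ?_, ?_, ?_⟩
      · rw [hHK, hRH]
      · rw [hKH]
        have h' : R * K = (Kᵀ * Rᵀ)ᵀ := by
          rw [transpose_mul, transpose_transpose, transpose_transpose]
        rw [h', hKs, hRs, hKR, hKs]
      · rw [hHK]; exact hRs
      · rw [hKH]; exact hRs
    constructor
    · rw [hpinvH, hKH, hR, trace_add, trace_smul, trace_vmv, smul_eq_mul,
        trace_mul_comm, inv_mul_cancel₀ hγne]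
    · rw [hpinvH, hK, trace_add, trace_sub, trace_smul, trace_smul, trace_add,
        trace_vmv, trace_vmv, trace_vmv, hcd, hdc, smul_eq_mul, smul_eq_mul]
      have hpos : 0 < β / γ ^ 2 * γ := by positivity
      nlinarith

lemma gram_psd {m : Type*} [Fintype m] (A : Matrix m n ℝ) (x : n → ℝ) :
    0 ≤ ((Aᵀ * A) *ᵥ x) ⬝ᵥ x := by
  have h : ((Aᵀ * A) *ᵥ x) ⬝ᵥ x = (A *ᵥ x) ⬝ᵥ (A *ᵥ x) := by
    rw [dotProduct_comm, ← mulVec_mulVec, dotProduct_mulVec, vecMul_transpose]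
  rw [h]
  exact Finset.sum_nonneg fun i _ => mul_self_nonneg _

end Stmt14Aux

namespace Stmt14Aux

lemma frobSq_eq_trace {m n : Type*} [Fintype m] [Fintype n] (A : Matrix m n ℝ) :
    frobSq A = trace (Aᵀ * A) := by
  simp only [frobSq, trace, Matrix.diag, mul_apply, transpose_apply, pow_two]
  exact Finset.sum_comm

variable {N k : ℕ}

lemma samp_mul_apply (S : Finset (Fin N)) (U : Matrix (Fin N) (Fin k) ℝ)
    (i : {x // x ∈ S}) (p : Fin k) : (samp S * U) i p = U i p := by
  rw [mul_apply]
  simp [samp, ite_mul, zero_mul]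

lemma gram_eq (S : Finset (Fin N)) (U : Matrix (Fin N) (Fin k) ℝ) :
    (samp S * U)ᵀ * (samp S * U)
      = ∑ j ∈ S, vecMulVec (fun p => U j p) (fun p => U j p) := by
  ext p q
  rw [mul_apply, Matrix.sum_apply]
  simp only [transpose_apply, vecMulVec_apply, samp_mul_apply]
  rw [← Finset.sum_coe_sort S (fun j => U j p * U j q)]

lemma xi2_trace (U : Matrix (Fin N) (Fin k) ℝ) (hU : Uᵀ * U = 1) (S : Finset (Fin N)) :
    xi2 U S = trace (pinv ((samp S * U)ᵀ * (samp S * U))) := by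
  set A := samp S * U with hA
  set W := Aᵀ * A with hW
  have hWs : Wᵀ = W := by rw [hW]; simp only [transpose_mul, transpose_transpose]
  have hP := isPinv_pinv (exists_isPinv_of_symm W hWs)
  set P := pinv W with hPdef
  have hPs : Pᵀ = P := isPinv_symm_of_symm hWs hP
  obtain ⟨h1, h2, h3, h4⟩ := hP
  have hpA : pinv A = P * Aᵀ := pinv_eq_pinv_gram_mul A
  simp only [xi2, lsRec, ← hA]
  rw [frobSq_eq_trace, hpA]
  have e1 : (U * (P * Aᵀ))ᵀ * (U * (P * Aᵀ)) = (A * P) * (P * Aᵀ) := by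
    calc (U * (P * Aᵀ))ᵀ * (U * (P * Aᵀ))
        = (P * Aᵀ)ᵀ * (Uᵀ * U * (P * Aᵀ)) := by
          simp only [transpose_mul, Matrix.mul_assoc]
    _ = (P * Aᵀ)ᵀ * (P * Aᵀ) := by rw [hU, Matrix.one_mul]
    _ = (A * P) * (P * Aᵀ) := by
          rw [transpose_mul, transpose_transpose, hPs]
  rw [e1, trace_mul_comm]
  have e2 : (P * Aᵀ) * (A * P) = P := by
    calc (P * Aᵀ) * (A * P) = (P * (Aᵀ * A)) * P := by simp only [Matrix.mul_assoc]
    _ = P := by rw [← hW]; exact h2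
  rw [e2]

lemma xi1_trace (U : Matrix (Fin N) (Fin k) ℝ) (hU : Uᵀ * U = 1) (S : Finset (Fin N)) :
    xi1 U S = (k : ℝ)
      - trace (pinv ((samp S * U)ᵀ * (samp S * U)) * ((samp S * U)ᵀ * (samp S * U))) := by
  set A := samp S * U with hA
  set W := Aᵀ * A with hW
  have hWs : Wᵀ = W := by rw [hW]; simp only [transpose_mul, transpose_transpose]
  have hP := isPinv_pinv (exists_isPinv_of_symm W hWs)
  set P := pinv W with hPdef
  have hPs : Pᵀ = P := isPinv_symm_of_symm hWs hP
  obtain ⟨h1, h2, h3, h4⟩ := hP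
  have hpA : pinv A = P * Aᵀ := pinv_eq_pinv_gram_mul A
  simp only [xi1, lsRec, ← hA]
  have e0 : U * pinv A * A = U * (P * W) := by
    rw [hpA, hW]
    simp only [Matrix.mul_assoc]
  rw [e0]
  have e1 : U - U * (P * W) = U * (1 - P * W) := by
    rw [Matrix.mul_sub, Matrix.mul_one]
  rw [e1, frobSq_eq_trace]
  have e2 : (U * (1 - P * W))ᵀ * (U * (1 - P * W)) = (1 - P * W)ᵀ * (1 - P * W) := by
    calc (U * (1 - P * W))ᵀ * (U * (1 - P * W))
        = (1 - P * W)ᵀ * (Uᵀ * U * (1 - P * W)) := by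
          simp only [transpose_mul, Matrix.mul_assoc]
    _ = (1 - P * W)ᵀ * (1 - P * W) := by rw [hU, Matrix.one_mul]
  rw [e2]
  have hQs : (1 - P * W)ᵀ = 1 - P * W := by
    rw [transpose_sub, transpose_one, h4]
  rw [hQs]
  have hQQ : (P * W) * (P * W) = P * W := by
    calc (P * W) * (P * W) = (P * W * P) * W := by simp only [Matrix.mul_assoc]
    _ = P * W := by rw [h2]
  have e3 : (1 - P * W) * (1 - P * W) = 1 - P * W := by
    rw [Matrix.sub_mul, Matrix.one_mul, Matrix.mul_sub, Matrix.mul_one, hQQ]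
    abel
  rw [e3, trace_sub, trace_one]
  simp

theorem stmt14_main (N k : ℕ) (U : Matrix (Fin N) (Fin k) ℝ) (hU : Uᵀ * U = 1)
    (S : Finset (Fin N)) (v : Fin N) (hv : v ∈ S) :
    (xi1 U S - xi1 U (S.erase v) = -1 → xi2 U (S.erase v) < xi2 U S) ∧
    (xi1 U S - xi1 U (S.erase v) = 0 → xi2 U S ≤ xi2 U (S.erase v)) := by
  classical
  set a : Fin k → ℝ := fun p => U v p with ha
  set G := (samp (S.erase v) * U)ᵀ * (samp (S.erase v) * U) with hG
  set W := (samp S * U)ᵀ * (samp S * U) with hW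
  have hsplit : W = G + vecMulVec a a := by
    rw [hW, hG, gram_eq, gram_eq, ← Finset.sum_erase_add S _ hv]
  have hGs : Gᵀ = G := by rw [hG]; simp only [transpose_mul, transpose_transpose]
  have hPSD : ∀ x : Fin k → ℝ, 0 ≤ (G *ᵥ x) ⬝ᵥ x := by
    intro x; rw [hG]; exact gram_psd _ x
  have main := meyer_main G (pinv G) hGs (isPinv_pinv' G) hPSD a
  rw [← hsplit] at main
  have e1 : xi1 U S = (k : ℝ) - trace (pinv W * W) := xi1_trace U hU S
  have e2 : xi1 U (S.erase v) = (k : ℝ) - trace (pinv G * G) := xi1_trace U hU (S.erase v)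
  have e3 : xi2 U S = trace (pinv W) := xi2_trace U hU S
  have e4 : xi2 U (S.erase v) = trace (pinv G) := xi2_trace U hU (S.erase v)
  rcases main with ⟨hT, hlt⟩ | ⟨hT, hle⟩
  · constructor
    · intro _
      rw [e3, e4]
      exact hlt
    · intro h0
      rw [e1, e2, hT] at h0
      linarith
  · constructor
    · intro h1
      rw [e1, e2, hT] at h1
      linarith
    · intro _
      rw [e3, e4]
      exact hle

end Stmt14Aux


/-- if `Δ₁(S,v) = −1` (i.e. removing `v` drops `rank(M_S U)` by one)
then `ξ₂(S∖{v}) < ξ₂(S)` (i.e. `Δ₂(S,v) > 0`); and if `Δ₁(S,v) = 0` (rank unchanged)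
then `ξ₂(S∖{v}) ≥ ξ₂(S)` (i.e. `Δ₂(S,v) ≤ 0`). -/
theorem stmt14 (N k : ℕ) (hN : 0 < N) (hk : 0 < k) (hkN : k ≤ N)
    (U : Matrix (Fin N) (Fin k) ℝ) (hU : Uᵀ * U = 1)
    (S : Finset (Fin N)) (hS : 2 ≤ S.card) (v : Fin N) (hv : v ∈ S) :
    (xi1 U S - xi1 U (S.erase v) = -1 → xi2 U (S.erase v) < xi2 U S) ∧
    (xi1 U S - xi1 U (S.erase v) = 0 → xi2 U S ≤ xi2 U (S.erase v)) := by
  exact Stmt14Aux.stmt14_main N k U hU S v hv
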